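/- Let $p$ be a prime and $\omega$ a primitive $p^n$-th root of unity in a field of characteristic zero ($n \ge 1$). If $P \in \mathbb{Z}[X]$ is a polynomial with $\deg P \le p^n - 1$, $P(\omega) = 0$, and $P$ has at most $p$ nonzero coefficients, then either $P = 0$, or there exists a unique $m$ with $0 \le m \le p^{n-1}-1$ and a nonzero integer $d$ such that $P(X) = d\, X^m \Phi_{p^n}(X)$, where $\Phi_{p^n}(X) = \sum_{j=0}^{p-1} X^{j p^{n-1}}$ is the $p^n$-th cyclotomic polynomial. -/

import Mathlib

open Polynomial

private lemma stmt3_aux {q a b i j : ℕ} (hq : 0 < q) (ha : a < q) (hb : b < q)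
    (h : a + i * q = b + j * q) : i = j := by
  have h1 : (a + i * q) / q = i := by
    rw [Nat.add_mul_div_right _ _ hq, Nat.div_eq_of_lt ha, Nat.zero_add]
  have h2 : (b + j * q) / q = j := by
    rw [Nat.add_mul_div_right _ _ hq, Nat.div_eq_of_lt hb, Nat.zero_add]
  rw [← h1, ← h2, h]

theorem stmt_3 {k : Type*} [Field k] [CharZero k]
    (p : ℕ) (hp : p.Prime) (n : ℕ) (hn : 1 ≤ n)
    (ω : k) (hω : IsPrimitiveRoot ω (p ^ n))
    (P : Polynomial ℤ)
    (hdeg : P.degree ≤ ((p ^ n - 1 : ℕ) : WithBot ℕ))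
    (hroot : Polynomial.aeval ω P = 0)
    (hsupp : P.support.card ≤ p) :
    P = 0 ∨ ∃! m : ℕ, m ≤ p ^ (n - 1) - 1 ∧ ∃ d : ℤ, d ≠ 0 ∧
      P = Polynomial.C d * Polynomial.X ^ m *
        (∑ j ∈ Finset.range p, Polynomial.X ^ (j * p ^ (n - 1))) := by
  by_cases hP : P = 0
  · exact Or.inl hP
  right
  set q := p ^ (n - 1) with hq
  have hq1 : 1 ≤ q := Nat.one_le_pow _ _ hp.pos
  have hqp : p ^ n = q * p := by
    rw [hq, ← pow_succ]
    congr 1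
    omega
  have hcyc : Polynomial.cyclotomic (p ^ n) ℤ =
      ∑ j ∈ Finset.range p, (X : ℤ[X]) ^ (j * q) := by
    have h1 : p ^ n = p ^ ((n - 1) + 1) := by congr 1; omega
    rw [h1, cyclotomic_prime_pow_eq_geom_sum hp]
    refine Finset.sum_congr rfl fun j _ => ?_
    rw [← pow_mul, mul_comm]
  set Φ : ℤ[X] := ∑ j ∈ Finset.range p, (X : ℤ[X]) ^ (j * q) with hΦdef
  have hdvd : Φ ∣ P := by
    rw [← hcyc]
    rw [← Polynomial.map_dvd_map (Int.castRingHom ℚ) Int.cast_injective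
      (cyclotomic.monic _ _), map_cyclotomic]
    rw [cyclotomic_eq_minpoly_rat hω (pow_pos hp.pos n)]
    apply minpoly.dvd
    have h2 : (Int.castRingHom ℚ) = algebraMap ℤ ℚ := rfl
    rw [h2, Polynomial.aeval_map_algebraMap]
    exact hroot
  obtain ⟨R, hPR⟩ := hdvd
  have hΦne : Φ ≠ 0 := by
    rw [← hcyc]
    exact (cyclotomic.monic _ _).ne_zero
  have hRne : R ≠ 0 := by rintro rfl; simp [hPR] at hP
  have hΦdeg : Φ.natDegree = (p - 1) * q := by
    rw [← hcyc, natDegree_cyclotomic, Nat.totient_prime_pow hp (by omega), mul_comm]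
  have hPdeg : P.natDegree ≤ p ^ n - 1 := Polynomial.natDegree_le_iff_degree_le.mpr hdeg
  have hRdeg : R.natDegree ≤ q - 1 := by
    have h := Polynomial.natDegree_mul hΦne hRne
    rw [← hPR, hΦdeg] at h
    have e : (p - 1) * q = p * q - q := by rw [Nat.sub_mul, one_mul]
    have hA : q ≤ p * q := Nat.le_mul_of_pos_left q hp.pos
    have h2 : P.natDegree ≤ p * q - 1 := by
      rw [hqp, mul_comm q p] at hPdeg; exact hPdeg
    rw [e] at h
    omega
  -- key coefficient computation
  have hcoeff : ∀ a ∈ R.support, ∀ j ∈ Finset.range p,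
      P.coeff (a + j * q) = R.coeff a := by
    intro a ha j hj
    have haq : a ≤ q - 1 := le_trans (Polynomial.le_natDegree_of_mem_supp a ha) hRdeg
    rw [hPR, mul_comm, hΦdef, Finset.mul_sum, Polynomial.finset_sum_coeff]
    rw [Finset.sum_eq_single j]
    · rw [Polynomial.coeff_mul_X_pow']
      simp
    · intro i hi hij
      rw [Polynomial.coeff_mul_X_pow']
      rcases lt_or_gt_of_ne hij with h | h
      · rw [if_pos ((Nat.mul_le_mul_right q h.le).trans (Nat.le_add_left _ _))]
        apply Polynomial.coeff_eq_zero_of_natDegree_lt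
        have e1 : (j - i) * q = j * q - i * q := Nat.sub_mul j i q
        have e2 : i * q ≤ j * q := Nat.mul_le_mul_right q h.le
        have e3 : q ≤ (j - i) * q := Nat.le_mul_of_pos_left q (by omega)
        omega
      · rw [if_neg ?_]
        have e1 : (j + 1) * q ≤ i * q := Nat.mul_le_mul_right q h
        have e2 : (j + 1) * q = j * q + q := by ring
        omega
    · intro h; exact absurd hj h
  have hcard : R.support.card * p ≤ P.support.card := by
    have := Finset.card_le_card_of_injOn
      (f := fun x : ℕ × ℕ => x.1 + x.2 * q)
      (s := R.support ×ˢ Finset.range p) (t := P.support)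
      (fun x hx => by
        simp only [Finset.mem_coe, Finset.mem_product] at hx ⊢
        rw [Polynomial.mem_support_iff, hcoeff x.1 hx.1 x.2 hx.2]
        exact Polynomial.mem_support_iff.mp hx.1)
      (fun x hx y hy hxy => by
        simp only [Finset.mem_product, Finset.mem_coe] at hx hy
        have hx1 : x.1 < q := by
          have := le_trans (Polynomial.le_natDegree_of_mem_supp _ hx.1) hRdeg
          omega
        have hy1 : y.1 < q := by
          have := le_trans (Polynomial.le_natDegree_of_mem_supp _ hy.1) hRdeg
          omega
        simp only at hxy
        have h2 : x.2 = y.2 := stmt3_aux (by omega) hx1 hy1 hxy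
        have h1 : x.1 = y.1 := by rw [h2] at hxy; omega
        exact Prod.ext h1 h2)
    simpa [Finset.card_product] using this
  have hRcard : R.support.card = 1 := by
    have h0 : R.support.card ≠ 0 := by
      simp [Polynomial.support_eq_empty, hRne]
    have h1 := le_trans hcard hsupp
    have h3 : R.support.card ≤ 1 := by
      by_contra hc
      push_neg at hc
      have : 2 * p ≤ R.support.card * p := Nat.mul_le_mul_right p hc
      have := hp.two_le
      omega
    omega
  obtain ⟨m, d, hd, rfl⟩ := Polynomial.card_support_eq_one.mp hRcard
  have hm : m ≤ q - 1 := by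
    have := hRdeg
    rwa [Polynomial.natDegree_C_mul_X_pow m d hd] at this
  refine ⟨m, ⟨hm, d, hd, by rw [hPR]; ring⟩, ?_⟩
  rintro m' ⟨hm', d', hd', hP'⟩
  have heq : C d' * X ^ m' * Φ = C d * X ^ m * Φ := by
    rw [← hP', hPR]; ring
  have h4 := mul_right_cancel₀ hΦne heq
  have h1 : (C d' * X ^ m').natDegree = (C d * X ^ m).natDegree := by rw [h4]
  rwa [Polynomial.natDegree_C_mul_X_pow m d hd,
    Polynomial.natDegree_C_mul_X_pow m' d' hd'] at h1
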